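/- Alignment in polar convolution: let A₁, A₂ ⊆ ℝⁿ be closed convex sets containing the origin. Suppose x = x₁ + x₂ with γ_{A₁+A₂}(x) = γ_{A₁}(x₁) = γ_{A₂}(x₂), all finite, and ⟨x, z⟩ = γ_{A₁+A₂}(x)·σ_{A₁+A₂}(z) with σ_{A₁+A₂}(z) finite. Then ⟨x₁, z⟩ = γ_{A₁}(x₁)·σ_{A₁}(z) and ⟨x₂, z⟩ = γ_{A₂}(x₂)·σ_{A₂}(z). -/

import Mathlib

open scoped RealInnerProductSpace Pointwise

noncomputable def supportFn {n : ℕ} (C : Set (EuclideanSpace ℝ (Fin n)))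
    (z : EuclideanSpace ℝ (Fin n)) : EReal :=
  sSup ((fun x => ((⟪x, z⟫ : ℝ) : EReal)) '' C)

noncomputable def gaugeE {n : ℕ} (C : Set (EuclideanSpace ℝ (Fin n)))
    (x : EuclideanSpace ℝ (Fin n)) : EReal :=
  sInf ((fun r : ℝ => (r : EReal)) '' {r : ℝ | 0 ≤ r ∧ x ∈ r • C})

section Aux

variable {n : ℕ}

lemma le_supportFn {C : Set (EuclideanSpace ℝ (Fin n))} {a : EuclideanSpace ℝ (Fin n)}
    (z : EuclideanSpace ℝ (Fin n)) (ha : a ∈ C) :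
    ((⟪a, z⟫ : ℝ) : EReal) ≤ supportFn C z :=
  le_sSup (Set.mem_image_of_mem _ ha)

lemma supportFn_nonneg {C : Set (EuclideanSpace ℝ (Fin n))}
    (z : EuclideanSpace ℝ (Fin n)) (h0 : (0 : EuclideanSpace ℝ (Fin n)) ∈ C) :
    (0 : EReal) ≤ supportFn C z := by
  have h := le_supportFn z h0
  simpa using h

lemma supportFn_mono {C D : Set (EuclideanSpace ℝ (Fin n))}
    (z : EuclideanSpace ℝ (Fin n)) (h : C ⊆ D) :
    supportFn C z ≤ supportFn D z :=
  sSup_le_sSup (Set.image_mono h)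

lemma gaugeE_nonneg (C : Set (EuclideanSpace ℝ (Fin n))) (x : EuclideanSpace ℝ (Fin n)) :
    (0 : EReal) ≤ gaugeE C x := by
  apply le_sInf
  rintro b ⟨r, ⟨hr0, -⟩, rfl⟩
  show (0 : EReal) ≤ (r : EReal)
  exact_mod_cast hr0

/-- Key inequality `⟪x,z⟫ ≤ g * s` when gauge and support are finite. -/
lemma inner_le_gauge_mul_support {C : Set (EuclideanSpace ℝ (Fin n))}
    {x z : EuclideanSpace ℝ (Fin n)} {g s : ℝ}
    (hg : gaugeE C x = (g : EReal)) (hs : supportFn C z = (s : EReal)) (hs0 : 0 ≤ s) :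
    ⟪x, z⟫ ≤ g * s := by
  have hε : ∀ ε : ℝ, 0 < ε → ⟪x, z⟫ ≤ (g + ε) * s := by
    intro ε hεpos
    have hlt : gaugeE C x < ((g + ε : ℝ) : EReal) := by
      rw [hg]; exact_mod_cast lt_add_of_pos_right g hεpos
    rw [gaugeE, sInf_lt_iff] at hlt
    obtain ⟨b, ⟨r, ⟨hr0, hrx⟩, rfl⟩, hb⟩ := hlt
    have hr : r < g + ε := by
      beta_reduce at hb
      exact_mod_cast hb
    obtain ⟨a, haC, rfl⟩ := hrx
    have haz : ⟪a, z⟫ ≤ s := by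
      have := le_supportFn z haC
      rw [hs] at this
      exact_mod_cast this
    rw [real_inner_smul_left]
    nlinarith [mul_le_mul_of_nonneg_left haz hr0]
  by_contra hcon
  push_neg at hcon
  rcases eq_or_lt_of_le hs0 with hs' | hs'
  · have := hε 1 one_pos
    nlinarith
  · have h2s : (0:ℝ) < 2 * s := by linarith
    have := hε ((⟪x, z⟫ - g * s) / (2 * s)) (div_pos (by linarith) h2s)
    have heq : (g + (⟪x, z⟫ - g * s) / (2 * s)) * s = g * s + (⟪x, z⟫ - g * s) / 2 := by
      field_simp
    rw [heq] at this
    linarith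

lemma supportFn_add {A₁ A₂ : Set (EuclideanSpace ℝ (Fin n))}
    {z : EuclideanSpace ℝ (Fin n)} {s₁ s₂ s : ℝ}
    (hA₁ : A₁.Nonempty) (hA₂ : A₂.Nonempty)
    (hs₁ : supportFn A₁ z = (s₁ : EReal)) (hs₂ : supportFn A₂ z = (s₂ : EReal))
    (hs : supportFn (A₁ + A₂) z = (s : EReal)) :
    s = s₁ + s₂ := by
  have hle : s ≤ s₁ + s₂ := by
    have : supportFn (A₁ + A₂) z ≤ ((s₁ + s₂ : ℝ) : EReal) := by
      apply sSup_le
      rintro b ⟨a, ⟨a₁, ha₁, a₂, ha₂, rfl⟩, rfl⟩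
      have h1 : ⟪a₁, z⟫ ≤ s₁ := by
        have := le_supportFn z ha₁; rw [hs₁] at this; exact_mod_cast this
      have h2 : ⟪a₂, z⟫ ≤ s₂ := by
        have := le_supportFn z ha₂; rw [hs₂] at this; exact_mod_cast this
      have h3 : ⟪a₁ + a₂, z⟫ ≤ s₁ + s₂ := by
        rw [inner_add_left]; linarith
      show ((⟪a₁ + a₂, z⟫ : ℝ) : EReal) ≤ ((s₁ + s₂ : ℝ) : EReal)
      exact_mod_cast h3
    rw [hs] at this
    exact_mod_cast this
  have hge : s₁ + s₂ ≤ s := by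
    have key : ∀ ε : ℝ, 0 < ε → s₁ + s₂ - 2 * ε ≤ s := by
      intro ε hεpos
      have hlt₁ : ((s₁ - ε : ℝ) : EReal) < supportFn A₁ z := by
        rw [hs₁]; exact_mod_cast sub_lt_self s₁ hεpos
      have hlt₂ : ((s₂ - ε : ℝ) : EReal) < supportFn A₂ z := by
        rw [hs₂]; exact_mod_cast sub_lt_self s₂ hεpos
      rw [supportFn, lt_sSup_iff] at hlt₁ hlt₂
      obtain ⟨b₁, ⟨a₁, ha₁, rfl⟩, hb₁⟩ := hlt₁
      obtain ⟨b₂, ⟨a₂, ha₂, rfl⟩, hb₂⟩ := hlt₂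
      have h1 : s₁ - ε < ⟪a₁, z⟫ := by
        beta_reduce at hb₁
        exact_mod_cast hb₁
      have h2 : s₂ - ε < ⟪a₂, z⟫ := by
        beta_reduce at hb₂
        exact_mod_cast hb₂
      have hmem : a₁ + a₂ ∈ A₁ + A₂ := Set.add_mem_add ha₁ ha₂
      have := le_supportFn z hmem
      rw [hs] at this
      have : ⟪a₁ + a₂, z⟫ ≤ s := by exact_mod_cast this
      rw [inner_add_left] at this
      linarith
    by_contra hcon
    push_neg at hcon
    have := key ((s₁ + s₂ - s) / 4) (by linarith)
    linarith
  linarith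

end Aux

/-- Alignment in polar convolution: if `x = x₁ + x₂` balances the gauges
`γ_{A₁+A₂}(x) = γ_{A₁}(x₁) = γ_{A₂}(x₂)` (all finite) and `(x, z)` is `(A₁+A₂)`-aligned with
`σ_{A₁+A₂}(z)` finite, then each `(xᵢ, z)` is `Aᵢ`-aligned. -/
theorem alignment_polar_convolution {n : ℕ} (A₁ A₂ : Set (EuclideanSpace ℝ (Fin n)))
    (h₁ : IsClosed A₁) (h₁conv : Convex ℝ A₁) (h₁0 : (0 : EuclideanSpace ℝ (Fin n)) ∈ A₁)
    (h₂ : IsClosed A₂) (h₂conv : Convex ℝ A₂) (h₂0 : (0 : EuclideanSpace ℝ (Fin n)) ∈ A₂)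
    (x x₁ x₂ z : EuclideanSpace ℝ (Fin n))
    (hx : x = x₁ + x₂)
    (hg1 : gaugeE (A₁ + A₂) x = gaugeE A₁ x₁)
    (hg2 : gaugeE (A₁ + A₂) x = gaugeE A₂ x₂)
    (hgfin : gaugeE (A₁ + A₂) x ≠ ⊤)
    (hσfin : supportFn (A₁ + A₂) z ≠ ⊤)
    (halign : ((⟪x, z⟫ : ℝ) : EReal) = gaugeE (A₁ + A₂) x * supportFn (A₁ + A₂) z) :
    ((⟪x₁, z⟫ : ℝ) : EReal) = gaugeE A₁ x₁ * supportFn A₁ z ∧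
      ((⟪x₂, z⟫ : ℝ) : EReal) = gaugeE A₂ x₂ * supportFn A₂ z := by
  -- gauge real value
  have hgbot : gaugeE (A₁ + A₂) x ≠ ⊥ :=
    fun h => by simpa [h] using gaugeE_nonneg (A₁ + A₂) x
  set g : ℝ := (gaugeE (A₁ + A₂) x).toReal with hgdef
  have hG : gaugeE (A₁ + A₂) x = (g : EReal) := (EReal.coe_toReal hgfin hgbot).symm
  have hg0 : 0 ≤ g := by
    have := gaugeE_nonneg (A₁ + A₂) x
    rw [hG] at this; exact_mod_cast this
  -- subsets
  have hsub₁ : A₁ ⊆ A₁ + A₂ := fun a ha => by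
    simpa using Set.add_mem_add ha h₂0
  have hsub₂ : A₂ ⊆ A₁ + A₂ := fun a ha => by
    simpa using Set.add_mem_add h₁0 ha
  -- support values
  have hσbot : supportFn (A₁ + A₂) z ≠ ⊥ :=
    fun h => by simpa [h] using supportFn_nonneg z (hsub₁ h₁0)
  set s : ℝ := (supportFn (A₁ + A₂) z).toReal with hsdef
  have hS : supportFn (A₁ + A₂) z = (s : EReal) := (EReal.coe_toReal hσfin hσbot).symm
  have hs0 : 0 ≤ s := by
    have := supportFn_nonneg z (hsub₁ h₁0)
    rw [hS] at this; exact_mod_cast this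
  have hσ₁fin : supportFn A₁ z ≠ ⊤ := by
    intro h
    have := supportFn_mono z hsub₁
    rw [h, hS, top_le_iff] at this
    exact (EReal.coe_ne_top s) this
  have hσ₁bot : supportFn A₁ z ≠ ⊥ :=
    fun h => by simpa [h] using supportFn_nonneg z h₁0
  have hσ₂fin : supportFn A₂ z ≠ ⊤ := by
    intro h
    have := supportFn_mono z hsub₂
    rw [h, hS, top_le_iff] at this
    exact (EReal.coe_ne_top s) this
  have hσ₂bot : supportFn A₂ z ≠ ⊥ :=
    fun h => by simpa [h] using supportFn_nonneg z h₂0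
  set s₁ : ℝ := (supportFn A₁ z).toReal with hs₁def
  have hS₁ : supportFn A₁ z = (s₁ : EReal) := (EReal.coe_toReal hσ₁fin hσ₁bot).symm
  have hs₁0 : 0 ≤ s₁ := by
    have := supportFn_nonneg z h₁0
    rw [hS₁] at this; exact_mod_cast this
  set s₂ : ℝ := (supportFn A₂ z).toReal with hs₂def
  have hS₂ : supportFn A₂ z = (s₂ : EReal) := (EReal.coe_toReal hσ₂fin hσ₂bot).symm
  have hs₂0 : 0 ≤ s₂ := by
    have := supportFn_nonneg z h₂0
    rw [hS₂] at this; exact_mod_cast this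
  have hsum : s = s₁ + s₂ :=
    supportFn_add ⟨0, h₁0⟩ ⟨0, h₂0⟩ hS₁ hS₂ hS
  -- key inequalities
  have hk₁ : ⟪x₁, z⟫ ≤ g * s₁ :=
    inner_le_gauge_mul_support (hg1 ▸ hG) hS₁ hs₁0
  have hk₂ : ⟪x₂, z⟫ ≤ g * s₂ :=
    inner_le_gauge_mul_support (hg2 ▸ hG) hS₂ hs₂0
  -- alignment as reals
  have hal : ⟪x, z⟫ = g * s := by
    rw [hG, hS, ← EReal.coe_mul] at halign
    exact_mod_cast halign
  have hxsum : ⟪x, z⟫ = ⟪x₁, z⟫ + ⟪x₂, z⟫ := by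
    rw [hx, inner_add_left]
  have he₁ : ⟪x₁, z⟫ = g * s₁ := by nlinarith
  have he₂ : ⟪x₂, z⟫ = g * s₂ := by nlinarith
  constructor
  · rw [← hg1, hG, hS₁, ← EReal.coe_mul]
    exact_mod_cast he₁
  · rw [← hg2, hG, hS₂, ← EReal.coe_mul]
    exact_mod_cast he₂
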